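/- Let x ∈ A_C for some C ∈ ℝ. The three gradients ∇p₁(x) = (1,…,1), ∇p₂(x) = (2x₁,…,2x₅), ∇p₃(x) = (3x₁²,…,3x₅²) are linearly dependent if and only if the coordinates x₁,…,x₅ take fewer than three distinct values. -/

import Mathlib

noncomputable section

/-- Power sum `p_k(x) = x₁^k + ⋯ + x₅^k` on `ℝ⁵`. -/
def p (k : ℕ) (x : Fin 5 → ℝ) : ℝ := ∑ i, x i ^ k

/-- The surface `A_C = {x ∈ ℝ⁵ : p₁(x) = 0, p₂(x) = 1, p₃(x) = C}`. -/
def A (C : ℝ) : Set (Fin 5 → ℝ) := {x | p 1 x = 0 ∧ p 2 x = 1 ∧ p 3 x = C}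

/-- The gradient of `p_k`: `∇p_k(x) = (k x₁^{k-1}, …, k x₅^{k-1})`. -/
def grad (k : ℕ) (x : Fin 5 → ℝ) : Fin 5 → ℝ := fun i => (k : ℝ) * x i ^ (k - 1)

/-- The set of coordinate permutations of a point `x₀ ∈ ℝ⁵`. -/
def perms (x₀ : Fin 5 → ℝ) : Set (Fin 5 → ℝ) := {x | ∃ σ : Equiv.Perm (Fin 5), x = x₀ ∘ σ}

lemma three_le_ncard {x : Fin 5 → ℝ} {i j k : Fin 5}
    (hij : x i ≠ x j) (hik : x i ≠ x k) (hjk : x j ≠ x k) :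
    3 ≤ (Set.range x).ncard := by
  have hsub : ({x i, x j, x k} : Set ℝ) ⊆ Set.range x := by
    intro a ha
    rcases ha with h | h | h <;> subst h <;> exact ⟨_, rfl⟩
  have h3 : ({x i, x j, x k} : Set ℝ).ncard = 3 :=
    Set.ncard_eq_three.mpr ⟨x i, x j, x k, hij, hik, hjk, rfl⟩
  calc 3 = ({x i, x j, x k} : Set ℝ).ncard := h3.symm
    _ ≤ (Set.range x).ncard := Set.ncard_le_ncard hsub (Set.finite_range x)

lemma exists_three_distinct {x : Fin 5 → ℝ} (h : 3 ≤ (Set.range x).ncard) :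
    ∃ i j k : Fin 5, x i ≠ x j ∧ x i ≠ x k ∧ x j ≠ x k := by
  rw [Set.ncard_eq_toFinset_card'] at h
  obtain ⟨t, hts, htc⟩ := Finset.exists_subset_card_eq h
  obtain ⟨a, b, c, hab, hac, hbc, rfl⟩ := Finset.card_eq_three.mp htc
  have ha : a ∈ Set.range x := Set.mem_toFinset.mp (hts (by simp))
  have hb : b ∈ Set.range x := Set.mem_toFinset.mp (hts (by simp))
  have hc : c ∈ Set.range x := Set.mem_toFinset.mp (hts (by simp))
  obtain ⟨i, rfl⟩ := ha
  obtain ⟨j, rfl⟩ := hb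
  obtain ⟨k, rfl⟩ := hc
  exact ⟨i, j, k, hab, hac, hbc⟩

/-- for `x ∈ A_C`, the gradients `∇p₁(x), ∇p₂(x), ∇p₃(x)` are linearly
dependent iff the coordinates of `x` take fewer than three distinct values. -/
theorem stmt_5 (C : ℝ) (x : Fin 5 → ℝ) (hx : x ∈ A C) :
    ¬ LinearIndependent ℝ ![grad 1 x, grad 2 x, grad 3 x] ↔ (Set.range x).ncard < 3 := by
  constructor
  · -- ¬ LI → fewer than 3 values; contrapositive
    intro hdep
    by_contra hge
    push_neg at hge
    obtain ⟨i, j, k, hij, hik, hjk⟩ := exists_three_distinct hge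
    apply hdep
    rw [Fintype.linearIndependent_iff]
    intro g hg
    have E : ∀ m : Fin 5, g 0 + g 1 * (2 * x m) + g 2 * (3 * x m ^ 2) = 0 := by
      intro m
      have := congrFun hg m
      simp [Fin.sum_univ_three, grad, Pi.add_apply, Pi.smul_apply] at this
      linarith [this]
    have Ei := E i
    have Ej := E j
    have Ek := E k
    have h1 : 2 * g 1 + 3 * g 2 * (x i + x j) = 0 := by
      have hne := sub_ne_zero.mpr hij
      apply mul_left_cancel₀ hne
      ring_nf
      linear_combination Ei - Ej
    have h2 : 2 * g 1 + 3 * g 2 * (x j + x k) = 0 := by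
      have hne := sub_ne_zero.mpr hjk
      apply mul_left_cancel₀ hne
      ring_nf
      linear_combination Ej - Ek
    have hg2 : g 2 = 0 := by
      have hne := sub_ne_zero.mpr hik
      have : (x i - x k) * (3 * g 2) = (x i - x k) * 0 := by linear_combination h1 - h2
      have := mul_left_cancel₀ hne this
      linarith
    have hg1 : g 1 = 0 := by rw [hg2] at h1; linarith
    have hg0 : g 0 = 0 := by rw [hg1, hg2] at Ei; linarith
    intro m
    fin_cases m <;> assumption
  · -- fewer than 3 values → dependent
    intro hlt
    -- find a, b with all coordinates in {a, b}
    obtain ⟨a, b, hab⟩ : ∃ a b : ℝ, ∀ i, x i = a ∨ x i = b := by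
      by_cases h : ∀ i, x i = x 0
      · exact ⟨x 0, x 0, fun i => Or.inl (h i)⟩
      · push_neg at h
        obtain ⟨j, hj⟩ := h
        refine ⟨x 0, x j, fun i => ?_⟩
        by_contra hi
        push_neg at hi
        exact absurd (three_le_ncard (Ne.symm hj) (Ne.symm hi.1) (Ne.symm hi.2))
          (by omega)
    rw [Fintype.not_linearIndependent_iff]
    refine ⟨![a * b, -(a + b) / 2, 1 / 3], ?_, 2, by simp⟩
    funext m
    simp [Fin.sum_univ_three, grad, Pi.add_apply, Pi.smul_apply]
    rcases hab m with h | h <;> rw [h] <;> ring
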